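/- arXiv:2009.13644 — 6 statements merged into one kernel-verified Lean document; each statement's English description precedes it below -/
import Mathlib

section
/- Let q be a prime power with q ≥ n, let w_0,...,w_{q-1} be distinct elements of GF(q), and for each m-subset a of {0,...,n-1} define χ(a) = (e_1(a),...,e_d(a)) where e_k(a) is the k-th elementary symmetric polynomial of the field elements {w_i : i ∈ a}. If 1 ≤ d < min(m, n-m), then χ is a proper vertex coloring of J^d(n,m): any two distinct m-subsets a, b with |a ∩ b| ≥ m - d have χ(a) ≠ χ(b). -/
open Polynomial in
/-- Graham–Sloane style coloring: with `F` a finite field of cardinality `q ≥ n`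
and `w : Fin n → F` injective (distinct field elements `w_0, ..., w_{n-1}`),
the vector of the first `d` elementary symmetric functions of `{w_i : i ∈ a}`
is a proper coloring of `J^d(n,m)` when `1 ≤ d < min m (n - m)`: adjacent
vertices differ in some coordinate `k ∈ [1, d]`. -/
theorem stmt7 (n m d : ℕ) (F : Type*) [Field F] [Fintype F]
    (hq : n ≤ Fintype.card F) (w : Fin n → F) (hw : Function.Injective w)
    (hd1 : 1 ≤ d) (hd : d < min m (n - m))
    (a b : Finset (Fin n)) (ha : a.card = m) (hb : b.card = m) (hne : a ≠ b)
    (hadj : m - d ≤ (a ∩ b).card) :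
    ∃ k ∈ Finset.Icc 1 d,
      (∑ S ∈ a.powersetCard k, ∏ i ∈ S, w i) ≠ (∑ S ∈ b.powersetCard k, ∏ i ∈ S, w i) := by
  by_contra hcon
  push_neg at hcon
  have hdm : d < m := lt_of_lt_of_le hd (min_le_left _ _)
  -- multisets of field elements
  set sa : Multiset F := a.val.map w with hsa
  set sb : Multiset F := b.val.map w with hsb
  have hca : Multiset.card sa = m := by simp [hsa, ha]
  have hcb : Multiset.card sb = m := by simp [hsb, hb]
  -- esymm agreement
  have hesymm : ∀ k ≤ d, sa.esymm k = sb.esymm k := by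
    intro k hk
    rcases Nat.eq_zero_or_pos k with rfl | hk1
    · simp [Multiset.esymm]
    · have := hcon k (Finset.mem_Icc.mpr ⟨hk1, hk⟩)
      rwa [← Finset.esymm_map_val w a k, ← Finset.esymm_map_val w b k] at this
  set P : F[X] := (sa.map fun t => X - C t).prod with hP
  set Q : F[X] := (sb.map fun t => X - C t).prod with hQ
  have hdegP : P.natDegree = m := by
    rw [hP, natDegree_multiset_prod_X_sub_C_eq_card, hca]
  have hdegQ : Q.natDegree = m := by
    rw [hQ, natDegree_multiset_prod_X_sub_C_eq_card, hcb]
  -- high coefficients of P - Q vanish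
  have hcoeff : ∀ j, m - d ≤ j → (P - Q).coeff j = 0 := by
    intro j hj
    rcases le_or_gt j m with hjm | hjm
    · have h1 : P.coeff j = (-1) ^ (m - j) * sa.esymm (m - j) := by
        have := Multiset.prod_X_sub_C_coeff sa (k := j) (by rw [hca]; exact hjm)
        rwa [hca] at this
      have h2 : Q.coeff j = (-1) ^ (m - j) * sb.esymm (m - j) := by
        have := Multiset.prod_X_sub_C_coeff sb (k := j) (by rw [hcb]; exact hjm)
        rwa [hcb] at this
      have hkd : m - j ≤ d := by omega
      rw [Polynomial.coeff_sub, h1, h2, hesymm _ hkd, sub_self]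
    · rw [Polynomial.coeff_sub,
        Polynomial.coeff_eq_zero_of_natDegree_lt (hdegP ▸ hjm),
        Polynomial.coeff_eq_zero_of_natDegree_lt (hdegQ ▸ hjm), sub_self]
  -- the common part divides P - Q
  set R : F[X] := ((a ∩ b).val.map fun i => X - C (w i)).prod with hR
  have hRP : R ∣ P := by
    rw [hR, hP, hsa, Multiset.map_map]
    exact Finset.prod_dvd_prod_of_subset _ _ _ Finset.inter_subset_left
  have hRQ : R ∣ Q := by
    rw [hR, hQ, hsb, Multiset.map_map]
    exact Finset.prod_dvd_prod_of_subset _ _ _ Finset.inter_subset_right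
  have hRD : R ∣ P - Q := dvd_sub hRP hRQ
  have hPQ : P = Q := by
    by_contra hPQ
    have hD0 : P - Q ≠ 0 := sub_ne_zero.mpr hPQ
    have hdegR : R.natDegree = (a ∩ b).card := by
      have key : (Multiset.map (fun i => X - C (w i)) (a ∩ b).val)
          = Multiset.map (fun t => X - C t) ((a ∩ b).val.map w) := by
        rw [Multiset.map_map]; rfl
      rw [hR, key, natDegree_multiset_prod_X_sub_C_eq_card, Multiset.card_map]
      rfl
    have h1 : R.natDegree ≤ (P - Q).natDegree := Polynomial.natDegree_le_of_dvd hRD hD0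
    have h2 : (P - Q).natDegree < m - d := by
      by_contra h2
      push_neg at h2
      exact Polynomial.leadingCoeff_ne_zero.mpr hD0 (hcoeff _ h2)
    omega
  -- conclude a = b
  have hroots : sa = sb := by
    have : P.roots = Q.roots := by rw [hPQ]
    rwa [hP, hQ, roots_multiset_prod_X_sub_C, roots_multiset_prod_X_sub_C]
      at this
  have : a.val = b.val := Multiset.map_injective hw hroots
  exact hne (Finset.val_injective this)
end

section
/- If a and b are distinct m-element subsets of an n-set with |a ∩ b| ≥ m - d where d < m, and all elementary symmetric polynomials of orders 1 through d of the elements of a (viewed as distinct elements of a field F) equal the corresponding elementary symmetric polynomials of the elements of b, then a = b. Equivalently: 2γ pairwise distinct elements of a field cannot all be roots of a monic polynomial of degree γ when γ ≥ 1. -/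
open Polynomial in
/-- If `a` and `b` are `m`-subsets of a field `F` with `|a ∩ b| ≥ m - d` where
`d < m`, and the elementary symmetric polynomials of orders `1` through `d` of
the elements of `a` agree with those of `b`, then `a = b`. -/
theorem stmt8 (F : Type*) [Field F] [DecidableEq F] (m d : ℕ) (hdm : d < m)
    (a b : Finset F) (ha : a.card = m) (hb : b.card = m)
    (hint : m - d ≤ (a ∩ b).card)
    (he : ∀ k ∈ Finset.Icc 1 d,
      (∑ S ∈ a.powersetCard k, ∏ x ∈ S, x) = (∑ S ∈ b.powersetCard k, ∏ x ∈ S, x)) :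
    a = b := by
  classical
  set Pa : F[X] := ∏ x ∈ a, (X - C x) with hPa
  set Pb : F[X] := ∏ x ∈ b, (X - C x) with hPb
  set Pc : F[X] := ∏ x ∈ (a ∩ b), (X - C x) with hPc
  set Pα : F[X] := ∏ x ∈ (a \ b), (X - C x) with hPα
  set Pβ : F[X] := ∏ x ∈ (b \ a), (X - C x) with hPβ
  have hsplitA : Pa = Pα * Pc := by
    rw [hPa, hPα, hPc, ← Finset.prod_union (Finset.disjoint_sdiff_inter a b),
      Finset.sdiff_union_inter]
  have hsplitB : Pb = Pβ * Pc := by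
    rw [hPb, hPβ, hPc, Finset.inter_comm a b,
      ← Finset.prod_union (Finset.disjoint_sdiff_inter b a), Finset.sdiff_union_inter]
  -- esymm equality
  have hesymm : ∀ k ≤ d, a.val.esymm k = b.val.esymm k := by
    intro k hk
    rcases Nat.eq_zero_or_pos k with rfl | hk1
    · simp [Multiset.esymm]
    · have := he k (Finset.mem_Icc.mpr ⟨hk1, hk⟩)
      have ea : a.val.esymm k = ∑ S ∈ a.powersetCard k, ∏ x ∈ S, x := by
        simpa using Finset.esymm_map_val id a k
      have eb : b.val.esymm k = ∑ S ∈ b.powersetCard k, ∏ x ∈ S, x := by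
        simpa using Finset.esymm_map_val id b k
      rw [ea, eb, this]
  have hdegA : Pa.natDegree = m := by
    rw [hPa, Polynomial.natDegree_prod _ _ (fun x _ => X_sub_C_ne_zero x)]
    simpa using ha
  have hdegB : Pb.natDegree = m := by
    rw [hPb, Polynomial.natDegree_prod _ _ (fun x _ => X_sub_C_ne_zero x)]
    simpa using hb
  have hcoeff : ∀ j, m - d ≤ j → Pa.coeff j = Pb.coeff j := by
    intro j hj
    rcases le_or_gt j m with hjm | hjm
    · have hka : j ≤ Multiset.card a.val := by simpa [ha] using hjm
      have hkb : j ≤ Multiset.card b.val := by simpa [hb] using hjm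
      have ca := Multiset.prod_X_sub_C_coeff a.val hka
      have cb := Multiset.prod_X_sub_C_coeff b.val hkb
      have hma : Multiset.card a.val = m := ha
      have hmb : Multiset.card b.val = m := hb
      rw [hma] at ca
      rw [hmb] at cb
      have ca' : Pa.coeff j = (-1) ^ (m - j) * a.val.esymm (m - j) := ca
      have cb' : Pb.coeff j = (-1) ^ (m - j) * b.val.esymm (m - j) := cb
      rw [ca', cb', hesymm (m - j) (by omega)]
    · rw [Polynomial.coeff_eq_zero_of_natDegree_lt (by omega : Pa.natDegree < j),
        Polynomial.coeff_eq_zero_of_natDegree_lt (by omega : Pb.natDegree < j)]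
  -- conclude Pα = Pβ
  have hPcne : Pc ≠ 0 := by
    rw [hPc]
    exact Finset.prod_ne_zero_iff.mpr fun x _ => X_sub_C_ne_zero x
  have hdegC : Pc.natDegree = (a ∩ b).card := by
    rw [hPc, Polynomial.natDegree_prod _ _ (fun x _ => X_sub_C_ne_zero x)]
    simp
  have hαβ : Pα = Pβ := by
    by_contra hne
    have hQ : Pα - Pβ ≠ 0 := sub_ne_zero.mpr hne
    have hprod : (Pα - Pβ) * Pc = Pa - Pb := by rw [hsplitA, hsplitB]; ring
    have hQP : (Pα - Pβ) * Pc ≠ 0 := mul_ne_zero hQ hPcne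
    have hdeg : ((Pα - Pβ) * Pc).natDegree = (Pα - Pβ).natDegree + Pc.natDegree :=
      Polynomial.natDegree_mul hQ hPcne
    have hge : m - d ≤ ((Pα - Pβ) * Pc).natDegree := by omega
    have : ((Pα - Pβ) * Pc).coeff (((Pα - Pβ) * Pc).natDegree) = 0 := by
      rw [hprod, Polynomial.coeff_sub, hcoeff _ (by rw [← hprod]; exact hge), sub_self]
    exact hQP (Polynomial.leadingCoeff_eq_zero.mp this)
  -- roots: a \ b = b \ a
  have hroots : (a \ b).val = (b \ a).val := by
    have h1 : Pα.roots = (a \ b).val := Polynomial.roots_prod_X_sub_C _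
    have h2 : Pβ.roots = (b \ a).val := Polynomial.roots_prod_X_sub_C _
    rw [← h1, ← h2, hαβ]
  have hsd : a \ b = ∅ := by
    have heq : a \ b = b \ a := Finset.val_injective hroots
    rw [Finset.eq_empty_iff_forall_notMem]
    intro x hx
    have hx' := heq ▸ hx
    rw [Finset.mem_sdiff] at hx hx'
    exact hx.2 hx'.1
  have hsub : a ⊆ b := by
    intro x hx
    by_contra hxb
    exact Finset.notMem_empty x (hsd ▸ Finset.mem_sdiff.mpr ⟨hx, hxb⟩)
  exact Finset.eq_of_subset_of_card_le hsub (by omega)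
end

section
/- Let n = a + b + c + r with a ≥ 2, b ≥ 2, c ≤ ⌊n/2⌋ - 2. For every c-element subset C of Z_n, every element y ∈ Z_n \ C, and every parity value M ∈ {0,1}, there exist a-element subsets A, A' of Z_n \ C with (Σ A) ≡ (Σ A') ≡ M (mod 2), y ∈ A, and y ∉ A'. (The parity-of-sum protocol is safe.) -/
/-- The parity-of-sum protocol is safe: with `n = a + b + c + r`, `a, b ≥ 2` and
`c ≤ ⌊n/2⌋ - 2`, for every `c`-subset `C`, every `y ∉ C` and every parity `M`,
there are `a`-subsets `A, A'` avoiding `C` with sums of parity `M`, `y ∈ A`,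
and `y ∉ A'`. -/
theorem stmt10 (n a b c r : ℕ) (hsum : n = a + b + c + r) (ha : 2 ≤ a) (hb : 2 ≤ b)
    (hc : c ≤ n / 2 - 2) (C : Finset (Fin n)) (hC : C.card = c)
    (y : Fin n) (hy : y ∉ C) (M : ℕ) (hM : M < 2) :
    ∃ A A' : Finset (Fin n), A.card = a ∧ A'.card = a ∧ Disjoint A C ∧ Disjoint A' C ∧
      (∑ x ∈ A, (x : ℕ)) % 2 = M ∧ (∑ x ∈ A', (x : ℕ)) % 2 = M ∧ y ∈ A ∧ y ∉ A' := by
  have hn4 : 4 ≤ n := by omega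
  have hcn : c + 2 ≤ n / 2 := by omega
  have hyc : y ∈ Cᶜ := by simpa using hy
  set S : Finset (Fin n) := Cᶜ.erase y with hSdef
  have hScard : S.card = n - c - 1 := by
    rw [hSdef, Finset.card_erase_of_mem hyc, Finset.card_compl, hC]
    simp
  have hySnot : y ∉ S := Finset.notMem_erase _ _
  have hSC : ∀ x ∈ S, x ∉ C := by
    intro x hx
    have := Finset.mem_of_mem_erase hx
    simpa using this
  -- find two elements of S of different parity
  have hzz : ∃ z ∈ S, ∃ z' ∈ S, (z : ℕ) % 2 ≠ (z' : ℕ) % 2 := by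
    by_contra h
    push_neg at h
    have hSne : S.Nonempty := by
      rw [← Finset.card_pos, hScard]; omega
    obtain ⟨z0, hz0⟩ := hSne
    -- all elements have same parity as z0; map x ↦ x/2 injectively into range ((n+1)/2)
    have hinj : Set.InjOn (fun x : Fin n => (x : ℕ) / 2) S := by
      intro u hu v hv huv
      have h1 := h u hu z0 hz0
      have h2 := h v hv z0 hz0
      have : (u : ℕ) = (v : ℕ) := by
        have : (u : ℕ) / 2 = (v : ℕ) / 2 := huv
        omega
      exact Fin.ext this
    have hmap : ∀ x ∈ S, (x : ℕ) / 2 ∈ Finset.range ((n + 1) / 2) := by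
      intro x hx
      have := x.isLt
      simp only [Finset.mem_range]
      omega
    have := Finset.card_le_card_of_injOn _ hmap hinj
    rw [hScard, Finset.card_range] at this
    omega
  obtain ⟨z, hzS, z', hz'S, hpar⟩ := hzz
  have hzz' : z ≠ z' := fun h => hpar (by rw [h])
  set S' : Finset (Fin n) := (S.erase z).erase z' with hS'def
  have hS'card : S'.card = n - c - 3 := by
    rw [hS'def, Finset.card_erase_of_mem (Finset.mem_erase.mpr ⟨hzz'.symm, hz'S⟩),
      Finset.card_erase_of_mem hzS, hScard]; omega
  have hS'S : S' ⊆ S := (Finset.erase_subset _ _).trans (Finset.erase_subset _ _)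
  have hzS' : z ∉ S' := fun h => (Finset.mem_erase.mp (Finset.mem_of_mem_erase h)).1 rfl
  have hz'S' : z' ∉ S' := fun h => (Finset.mem_erase.mp h).1 rfl
  have hEex : ∃ E ⊆ S', E.card = a - 1 := Finset.exists_subset_card_eq (by omega)
  obtain ⟨E, hES', hEcard⟩ := hEex
  have hEne : E.Nonempty := by rw [← Finset.card_pos, hEcard]; omega
  obtain ⟨w, hwE⟩ := hEne
  set F : Finset (Fin n) := E.erase w with hFdef
  have hFcard : F.card = a - 2 := by
    rw [hFdef, Finset.card_erase_of_mem hwE, hEcard]; omega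
  have hFE : F ⊆ E := Finset.erase_subset _ _
  have hES : E ⊆ S := hES'.trans hS'S
  have hFS : F ⊆ S := hFE.trans hES
  have hyE : y ∉ E := fun h => hySnot (hES h)
  have hyF : y ∉ F := fun h => hySnot (hFS h)
  have hzE : z ∉ E := fun h => hzS' (hES' h)
  have hz'E : z' ∉ E := fun h => hz'S' (hES' h)
  have hzF : z ∉ F := fun h => hzE (hFE h)
  have hz'F : z' ∉ F := fun h => hz'E (hFE h)
  have hyz : y ≠ z := fun h => hySnot (h ▸ hzS)
  have hyz' : y ≠ z' := fun h => hySnot (h ▸ hz'S)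
  -- choose zA for A
  have hchA : ∃ u : Fin n, (u = z ∨ u = z') ∧
      ((y : ℕ) + ((u : ℕ) + ∑ x ∈ F, (x : ℕ))) % 2 = M := by
    by_cases hcase : ((y : ℕ) + ((z : ℕ) + ∑ x ∈ F, (x : ℕ))) % 2 = M
    · exact ⟨z, Or.inl rfl, hcase⟩
    · exact ⟨z', Or.inr rfl, by omega⟩
  obtain ⟨zA, hzA, hsumA⟩ := hchA
  have hchA' : ∃ u : Fin n, (u = z ∨ u = z') ∧
      ((u : ℕ) + ∑ x ∈ E, (x : ℕ)) % 2 = M := by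
    by_cases hcase : ((z : ℕ) + ∑ x ∈ E, (x : ℕ)) % 2 = M
    · exact ⟨z, Or.inl rfl, hcase⟩
    · exact ⟨z', Or.inr rfl, by omega⟩
  obtain ⟨zB, hzB, hsumB⟩ := hchA'
  have hzAF : zA ∉ F := by rcases hzA with h | h <;> subst h <;> assumption
  have hzBE : zB ∉ E := by rcases hzB with h | h <;> subst h <;> assumption
  have hyzA : y ≠ zA := by rcases hzA with h | h <;> subst h <;> assumption
  have hyzB : y ≠ zB := by rcases hzB with h | h <;> subst h <;> assumption
  have hzAS : zA ∈ S := by rcases hzA with h | h <;> subst h <;> assumption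
  have hzBS : zB ∈ S := by rcases hzB with h | h <;> subst h <;> assumption
  have hyiA : y ∉ insert zA F := by
    simp only [Finset.mem_insert]
    rintro (h | h)
    · exact hyzA h
    · exact hyF h
  refine ⟨insert y (insert zA F), insert zB E, ?_, ?_, ?_, ?_, ?_, ?_, ?_, ?_⟩
  · rw [Finset.card_insert_of_notMem hyiA, Finset.card_insert_of_notMem hzAF, hFcard]
    omega
  · rw [Finset.card_insert_of_notMem hzBE, hEcard]; omega
  · rw [Finset.disjoint_left]
    intro x hx
    simp only [Finset.mem_insert] at hx
    rcases hx with h | h | h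
    · subst h; exact hy
    · subst h; exact hSC _ hzAS
    · exact hSC _ (hFS h)
  · rw [Finset.disjoint_left]
    intro x hx
    simp only [Finset.mem_insert] at hx
    rcases hx with h | h
    · subst h; exact hSC _ hzBS
    · exact hSC _ (hES h)
  · rw [Finset.sum_insert hyiA, Finset.sum_insert hzAF]
    exact hsumA
  · rw [Finset.sum_insert hzBE]
    exact hsumB
  · exact Finset.mem_insert_self _ _
  · simp only [Finset.mem_insert]
    rintro (h | h)
    · exact hyzB h
    · exact hyE h
end

section
/- Let 2 ≤ m ≤ n/2. For every residue M ∈ Z_n and every x ∈ Z_n, there exists an m-element subset a of Z_n with Σ_{t∈a} t ≡ M (mod n) such that a contains m-1 consecutive residues (mod n) starting at either x or x+1. (I.e., a is either {x, x+1, ..., x+m-2, r} or {x+1, ..., x+m-1, r'} for some additional element.) -/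
/-- For `2 ≤ m ≤ n/2`, every residue `M` is the element-sum of some `m`-subset
of `Z_n` consisting of `m - 1` consecutive residues starting at `x` or at
`x + 1`, together with one additional element. -/
theorem stmt11 (n m : ℕ) (hm : 2 ≤ m) (hmn : 2 * m ≤ n) (M x : ZMod n) :
    ∃ a : Finset (ZMod n), a.card = m ∧ (∑ t ∈ a, t) = M ∧
      ((∃ r : ZMod n, a = insert r ((Finset.range (m - 1)).image (fun i : ℕ => x + (i : ZMod n)))) ∨
       (∃ r : ZMod n, a = insert r ((Finset.range (m - 1)).image (fun i : ℕ => x + 1 + (i : ZMod n))))) := by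
  have hn0 : 0 < n := by omega
  haveI : NeZero n := ⟨by omega⟩
  have hinj : ∀ a b : ℕ, a < n → b < n → (a : ZMod n) = (b : ZMod n) → a = b := by
    intro a b ha hb h
    have := congrArg ZMod.val h
    rwa [ZMod.val_cast_of_lt ha, ZMod.val_cast_of_lt hb] at this
  set B := (Finset.range (m-1)).image (fun i : ℕ => x + (i : ZMod n)) with hB
  set B' := (Finset.range (m-1)).image (fun i : ℕ => x + 1 + (i : ZMod n)) with hB'
  have hinjB : Set.InjOn (fun i : ℕ => x + (i : ZMod n)) (Finset.range (m-1)) := by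
    intro a ha b hb h
    simp only [Finset.coe_range, Set.mem_Iio] at ha hb
    exact hinj a b (by omega) (by omega) (add_left_cancel h)
  have hinjB' : Set.InjOn (fun i : ℕ => x + 1 + (i : ZMod n)) (Finset.range (m-1)) := by
    intro a ha b hb h
    simp only [Finset.coe_range, Set.mem_Iio] at ha hb
    exact hinj a b (by omega) (by omega) (add_left_cancel h)
  have hcardB : B.card = m - 1 := by
    rw [hB, Finset.card_image_of_injOn hinjB, Finset.card_range]
  have hcardB' : B'.card = m - 1 := by
    rw [hB', Finset.card_image_of_injOn hinjB', Finset.card_range]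
  set S : ZMod n := ∑ i ∈ Finset.range (m-1), (x + (i : ZMod n)) with hS
  have hsumB : ∑ t ∈ B, t = S := by
    rw [hB, Finset.sum_image hinjB]
  have hsumB' : ∑ t ∈ B', t = S + ((m-1 : ℕ) : ZMod n) := by
    rw [hB', Finset.sum_image hinjB', hS]
    have hc : ∀ i ∈ Finset.range (m-1), x + 1 + (i : ZMod n) = (x + (i : ZMod n)) + 1 := by
      intros; ring
    rw [Finset.sum_congr rfl hc, Finset.sum_add_distrib, Finset.sum_const, Finset.card_range]
    simp
  set r : ZMod n := M - S with hr
  by_cases hmem : r ∈ B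
  · -- use B'
    set r' : ZMod n := M - (S + ((m-1 : ℕ) : ZMod n)) with hr'
    have hnot : r' ∉ B' := by
      intro hmem'
      rw [hB] at hmem
      rw [hB'] at hmem'
      obtain ⟨i, hi, hieq⟩ := Finset.mem_image.mp hmem
      obtain ⟨j, hj, hjeq⟩ := Finset.mem_image.mp hmem'
      simp only [Finset.mem_range] at hi hj
      have key : ((j + m : ℕ) : ZMod n) = (i : ZMod n) := by
        have h1 : x + 1 + (j : ZMod n) = x + (i : ZMod n) - ((m-1 : ℕ) : ZMod n) := by
          rw [hjeq, hr', hieq, hr]; ring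
        have hm1 : ((m-1 : ℕ) : ZMod n) + 1 = (m : ℕ) := by
          rw [← Nat.cast_succ]
          congr 1
          omega
        push_cast
        have : (j : ZMod n) + 1 + ((m-1 : ℕ) : ZMod n) = (i : ZMod n) := by
          have := h1
          linear_combination this
        calc (j : ZMod n) + (m : ℕ) = (j : ZMod n) + 1 + ((m-1:ℕ) : ZMod n) := by
              rw [← hm1]; ring
          _ = (i : ZMod n) := this
      have := hinj (j + m) i (by omega) (by omega) key
      omega
    refine ⟨insert r' B', ?_, ?_, Or.inr ⟨r', rfl⟩⟩
    · rw [Finset.card_insert_of_notMem hnot, hcardB']; omega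
    · rw [Finset.sum_insert hnot, hsumB', hr']; ring
  · refine ⟨insert r B, ?_, ?_, Or.inl ⟨r, rfl⟩⟩
    · rw [Finset.card_insert_of_notMem hmem, hcardB]; omega
    · rw [Finset.sum_insert hmem, hsumB, hr]; ring
end

section
/- Let n = a + c + b with a ≥ 2, c ≥ 0, and a + c < n/2. Let C be a c-subset of Z_n, let A be an a-subset of Z_n disjoint from C, and let z_1, z_2 be distinct elements of A. Then there exist y_1, y_2 ∉ A ∪ C with y_1 ≠ y_2 and y_1 + y_2 ≡ z_1 + z_2 (mod n); consequently A' = (A \ {z_1,z_2}) ∪ {y_1,y_2} is an a-subset disjoint from C ∪ {z_1,z_2} with the same element-sum mod n as A. -/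
lemma stmt13_aux (n : ℕ) [NeZero n] (t s : ZMod n) (h : t + t = s) :
    t.val + t.val = s.val ∨ t.val + t.val = s.val + n := by
  have h1 : (t.val + t.val) % n = s.val := by rw [← ZMod.val_add, h]
  have hv : t.val < n := ZMod.val_lt t
  have hs : s.val < n := ZMod.val_lt s
  obtain ⟨q, hq⟩ : ∃ q, t.val + t.val = s.val + n * q :=
    ⟨(t.val + t.val) / n, by rw [← h1]; exact (Nat.mod_add_div _ _).symm⟩
  have hq2 : q < 2 := by
    by_contra hh
    push_neg at hh
    have : n * 2 ≤ n * q := Nat.mul_le_mul_left n hh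
    omega
  interval_cases q <;> omega

/-- Shifting lemma: with `n = a + c + b`, `a ≥ 2` and `a + c < n/2`, given a
`c`-set `C`, an `a`-set `A ⊆ Z_n` disjoint from `C`, and distinct `z₁, z₂ ∈ A`,
there are distinct `y₁, y₂ ∉ A ∪ C` with `y₁ + y₂ = z₁ + z₂`; consequently
`A' = (A \ {z₁,z₂}) ∪ {y₁,y₂}` is an `a`-set disjoint from `C ∪ {z₁,z₂}` with
the same element-sum mod `n` as `A`. -/
theorem stmt13 (n a b c : ℕ) (hn : n = a + c + b) (ha : 2 ≤ a)
    (hac : 2 * (a + c) < n)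
    (C A : Finset (ZMod n)) (hC : C.card = c) (hA : A.card = a)
    (hdisj : Disjoint A C)
    (z₁ z₂ : ZMod n) (hz1 : z₁ ∈ A) (hz2 : z₂ ∈ A) (hzne : z₁ ≠ z₂) :
    ∃ y₁ y₂ : ZMod n, y₁ ≠ y₂ ∧ y₁ ∉ A ∪ C ∧ y₂ ∉ A ∪ C ∧ y₁ + y₂ = z₁ + z₂ ∧
      ((A \ {z₁, z₂}) ∪ {y₁, y₂}).card = a ∧
      Disjoint ((A \ {z₁, z₂}) ∪ {y₁, y₂}) (C ∪ {z₁, z₂}) ∧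
      (∑ t ∈ (A \ {z₁, z₂}) ∪ {y₁, y₂}, t) = ∑ t ∈ A, t := by
  haveI : NeZero n := ⟨by omega⟩
  set s : ZMod n := z₁ + z₂ with hs
  -- the set of solutions of t + t = s has at most 2 elements
  set K : Finset (ZMod n) := Finset.univ.filter (fun t => t + t = s) with hK
  have hKcard : K.card ≤ 2 := by
    have : K.card ≤ (Finset.univ : Finset Bool).card := by
      apply Finset.card_le_card_of_injOn (fun t => decide (2 * t.val = s.val))
      · intro t _; exact Finset.mem_univ _
      · intro t₁ ht₁ t₂ ht₂ hft
        simp only [hK, Finset.mem_coe, Finset.mem_filter] at ht₁ ht₂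
        have e1 := stmt13_aux n t₁ s ht₁.2
        have e2 := stmt13_aux n t₂ s ht₂.2
        have : t₁.val = t₂.val := by
          rcases e1 with e1 | e1 <;> rcases e2 with e2 | e2
          · omega
          · exfalso; simp only [decide_eq_decide] at hft; omega
          · exfalso; simp only [decide_eq_decide] at hft; omega
          · omega
        exact ZMod.val_injective n this
    simpa using this
  -- key existence of a good pair
  have hACcard : (A ∪ C).card = a + c := by
    rw [Finset.card_union_of_disjoint hdisj, hA, hC]
  have key : ∃ y : ZMod n, y ∉ A ∪ C ∧ s - y ∉ A ∪ C ∧ y ≠ s - y := by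
    by_contra hcon
    push_neg at hcon
    set U : Finset (ZMod n) := Finset.univ \ (A ∪ C ∪ K) with hU
    have hUcard : n - (a + c + 2) ≤ U.card := by
      have h1 : (A ∪ C ∪ K).card ≤ a + c + 2 := by
        calc (A ∪ C ∪ K).card ≤ (A ∪ C).card + K.card := Finset.card_union_le _ _
        _ ≤ a + c + 2 := by omega
      have h2 : U.card = n - (A ∪ C ∪ K).card := by
        rw [hU, Finset.card_sdiff_of_subset (Finset.subset_univ _)]
        congr 1
        simpa using ZMod.card n
      omega
    -- injective map t ↦ s - t from U into (A ∪ C) \ {z₁, z₂}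
    have hmaps : ∀ t ∈ U, s - t ∈ (A ∪ C) \ ({z₁, z₂} : Finset (ZMod n)) := by
      intro t ht
      simp only [hU, Finset.mem_sdiff, Finset.mem_univ, true_and, Finset.mem_union,
        hK, Finset.mem_filter, not_or, not_and] at ht
      obtain ⟨htAC, htK⟩ := ht
      have htAC' : t ∉ A ∪ C := by simp [Finset.mem_union]; tauto
      have hne : t ≠ s - t := by
        intro h
        exact htK (by linear_combination h)
      have hst : s - t ∈ A ∪ C := by
        by_contra hst
        exact hne (hcon t htAC' hst)
      rw [Finset.mem_sdiff]
      refine ⟨hst, ?_⟩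
      simp only [Finset.mem_insert, Finset.mem_singleton]
      rintro (h | h)
      · apply htAC'
        have : t = z₂ := by rw [hs] at h; linear_combination -h
        rw [this]; exact Finset.mem_union_left _ hz2
      · apply htAC'
        have : t = z₁ := by rw [hs] at h; linear_combination -h
        rw [this]; exact Finset.mem_union_left _ hz1
    have hinj : Set.InjOn (fun t => s - t) U := by
      intro t₁ _ t₂ _ h
      simpa using sub_right_injective h
    have hsub : ({z₁, z₂} : Finset (ZMod n)) ⊆ A ∪ C := by
      intro x hx
      simp only [Finset.mem_insert, Finset.mem_singleton] at hx
      rcases hx with h | h <;> subst h <;> exact Finset.mem_union_left _ (by assumption)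
    have hcard2 : ({z₁, z₂} : Finset (ZMod n)).card = 2 := by
      rw [Finset.card_insert_of_notMem (by simpa using hzne), Finset.card_singleton]
    have hle : U.card ≤ ((A ∪ C) \ ({z₁, z₂} : Finset (ZMod n))).card :=
      Finset.card_le_card_of_injOn _ hmaps hinj
    have : ((A ∪ C) \ ({z₁, z₂} : Finset (ZMod n))).card = a + c - 2 := by
      rw [Finset.card_sdiff_of_subset hsub, hACcard, hcard2]
    omega
  obtain ⟨y, hy1, hy2, hyne⟩ := key
  refine ⟨y, s - y, hyne, hy1, hy2, by ring, ?_, ?_, ?_⟩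
  · -- cardinality
    have hdisj' : Disjoint (A \ {z₁, z₂}) ({y, s - y} : Finset (ZMod n)) := by
      simp only [Finset.disjoint_right, Finset.mem_insert, Finset.mem_singleton,
        Finset.mem_sdiff]
      rintro x (h | h) ⟨hxA, _⟩ <;> subst h
      · exact hy1 (Finset.mem_union_left _ hxA)
      · exact hy2 (Finset.mem_union_left _ hxA)
    rw [Finset.card_union_of_disjoint hdisj']
    have hsub : ({z₁, z₂} : Finset (ZMod n)) ⊆ A := by
      intro x hx
      simp only [Finset.mem_insert, Finset.mem_singleton] at hx
      rcases hx with h | h <;> subst h <;> assumption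
    have hcard2 : ({z₁, z₂} : Finset (ZMod n)).card = 2 := by
      rw [Finset.card_insert_of_notMem (by simpa using hzne), Finset.card_singleton]
    have hcardy : ({y, s - y} : Finset (ZMod n)).card = 2 := by
      rw [Finset.card_insert_of_notMem (by simpa using hyne), Finset.card_singleton]
    rw [Finset.card_sdiff_of_subset hsub, hA, hcard2, hcardy]
    omega
  · -- disjointness
    rw [Finset.disjoint_union_left, Finset.disjoint_union_right, Finset.disjoint_union_right]
    refine ⟨⟨Finset.disjoint_of_subset_left (Finset.sdiff_subset) hdisj, ?_⟩, ?_, ?_⟩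
    · exact Finset.sdiff_disjoint
    · simp only [Finset.disjoint_left, Finset.mem_insert, Finset.mem_singleton]
      rintro x (h | h) hx <;> subst h
      · exact hy1 (Finset.mem_union_right _ hx)
      · exact hy2 (Finset.mem_union_right _ hx)
    · simp only [Finset.disjoint_left, Finset.mem_insert, Finset.mem_singleton]
      rintro x (h | h) (h' | h') <;> subst h <;>
        first
        | exact hy1 (by rw [h']; exact Finset.mem_union_left _ hz1)
        | exact hy1 (by rw [h']; exact Finset.mem_union_left _ hz2)
        | exact hy2 (by rw [h']; exact Finset.mem_union_left _ hz1)
        | exact hy2 (by rw [h']; exact Finset.mem_union_left _ hz2)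
  · -- sums agree
    have hdisj' : Disjoint (A \ {z₁, z₂}) ({y, s - y} : Finset (ZMod n)) := by
      simp only [Finset.disjoint_right, Finset.mem_insert, Finset.mem_singleton,
        Finset.mem_sdiff]
      rintro x (h | h) ⟨hxA, _⟩ <;> subst h
      · exact hy1 (Finset.mem_union_left _ hxA)
      · exact hy2 (Finset.mem_union_left _ hxA)
    have hsub : ({z₁, z₂} : Finset (ZMod n)) ⊆ A := by
      intro x hx
      simp only [Finset.mem_insert, Finset.mem_singleton] at hx
      rcases hx with h | h <;> subst h <;> assumption
    rw [Finset.sum_union hdisj', Finset.sum_pair hyne,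
      ← Finset.sum_sdiff hsub (f := fun t => t), Finset.sum_pair hzne]
    rw [hs]; ring
end

section
/- Suppose d = c + r ≥ min(a, n-a) - 1, c ≥ 1, and a ≥ 2, where n ≥ a. Then there is no safe proper coloring of J^d(n,a). Specifically: in J^d(n,a) with d = min(a, n-a) - 1, two a-subsets are adjacent iff they intersect; a safe coloring requires two distinct hands of the same color sharing a common card, contradicting properness; and when d ≥ min(a, n-a), J^d(n,a) is complete so a proper coloring determines the hand uniquely. -/
/-- If `d = c + r ≥ min(a, n-a) - 1`, `c ≥ 1`, `a ≥ 2` (with `n = a + b + c + r`,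
`b ≥ 1`), then there is no coloring `P` of the `a`-subsets of an `n`-set that is
both a proper coloring of `J^{c+r}(n,a)` and safe against an eavesdropper
holding `c` cards. -/
theorem stmt14 (n a b c r : ℕ) (hn : n = a + b + c + r) (hb : 1 ≤ b)
    (ha : 2 ≤ a) (hc : 1 ≤ c) (hd : min a (n - a) - 1 ≤ c + r)
    (M : Type*) (P : Finset (Fin n) → M)
    (hproper : ∀ A B : Finset (Fin n), A.card = a → B.card = a → A ≠ B →
      a - (c + r) ≤ (A ∩ B).card → P A ≠ P B)
    (hsafe : ∀ γ : Finset (Fin n), γ.card = c → ∀ y ∉ γ,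
      ∀ A : Finset (Fin n), A.card = a → Disjoint A γ →
        ∃ A₁ A₂ : Finset (Fin n), A₁.card = a ∧ A₂.card = a ∧
          Disjoint A₁ γ ∧ Disjoint A₂ γ ∧ P A₁ = P A ∧ P A₂ = P A ∧
          y ∈ A₁ ∧ y ∉ A₂) :
    False := by
  have hcard : (Finset.univ : Finset (Fin n)).card = n := by simp
  -- choose A of size a
  obtain ⟨A, -, hA⟩ := Finset.exists_subset_card_eq (s := (Finset.univ : Finset (Fin n))) (n := a)
    (by rw [hcard]; omega)
  have hAc : (Finset.univ \ A).card = n - a := by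
    rw [Finset.card_sdiff_of_subset (Finset.subset_univ A), hcard, hA]
  by_cases hcase : a ≤ c + r + 1
  · -- choose y ∉ A
    obtain ⟨y, hy⟩ : (Finset.univ \ A).Nonempty := by
      rw [← Finset.card_pos, hAc]; omega
    have hyA : y ∉ A := (Finset.mem_sdiff.mp hy).2
    -- choose γ ⊆ univ \ (insert y A) of size c
    obtain ⟨γ, hγsub, hγ⟩ := Finset.exists_subset_card_eq
        (s := Finset.univ \ insert y A) (n := c) (by
      rw [Finset.card_sdiff_of_subset (Finset.subset_univ _), hcard,
        Finset.card_insert_of_notMem hyA, hA]; omega)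
    have hyγ : y ∉ γ := fun h => (Finset.mem_sdiff.mp (hγsub h)).2 (Finset.mem_insert_self _ _)
    have hAγ : Disjoint A γ := by
      rw [Finset.disjoint_right]
      intro x hx
      exact fun hxA => (Finset.mem_sdiff.mp (hγsub hx)).2 (Finset.mem_insert_of_mem hxA)
    obtain ⟨A₁, A₂, hA₁, hA₂, hA₁γ, hA₂γ, hP₁, hP₂, hyA₁, hyA₂⟩ :=
      hsafe γ hγ y hyγ A hA hAγ
    have hA₁ne : A₁ ≠ A := fun h => hyA (h ▸ hyA₁)
    by_cases hle : a ≤ c + r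
    · -- trivial: any two distinct same-colored sets
      exact hproper A₁ A hA₁ hA hA₁ne (by omega) (hP₁.trans rfl)
    · have haeq : a = c + r + 1 := by omega
      by_cases hint : (A ∩ A₁).card = 0
      · -- A and A₁ disjoint; second application of safety
        -- γ' = insert y δ with δ ⊆ univ \ (insert y A), card c - 1
        obtain ⟨δ, hδsub, hδ⟩ := Finset.exists_subset_card_eq
            (s := Finset.univ \ insert y A) (n := (c - 1)) (by
          rw [Finset.card_sdiff_of_subset (Finset.subset_univ _), hcard,
            Finset.card_insert_of_notMem hyA, hA]; omega)
        have hyδ : y ∉ δ := fun h => (Finset.mem_sdiff.mp (hδsub h)).2 (Finset.mem_insert_self _ _)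
        set γ' : Finset (Fin n) := insert y δ with hγ'def
        have hγ' : γ'.card = c := by
          rw [Finset.card_insert_of_notMem hyδ, hδ]; omega
        have hAγ' : Disjoint A γ' := by
          rw [Finset.disjoint_right]
          intro x hx
          rcases Finset.mem_insert.mp hx with h | h
          · exact h ▸ hyA
          · exact fun hxA => (Finset.mem_sdiff.mp (hδsub h)).2 (Finset.mem_insert_of_mem hxA)
        -- pick w ∈ A₁ \ γ'
        obtain ⟨w, hw⟩ : (A₁ \ γ').Nonempty := by
          rw [← Finset.card_pos]
          have h1 : A₁.card - γ'.card ≤ (A₁ \ γ').card := Finset.le_card_sdiff _ _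
          omega
        have hwA₁ : w ∈ A₁ := (Finset.mem_sdiff.mp hw).1
        have hwγ' : w ∉ γ' := (Finset.mem_sdiff.mp hw).2
        obtain ⟨B₁, B₂, hB₁, hB₂, hB₁γ, hB₂γ, hQ₁, hQ₂, hwB₁, hwB₂⟩ :=
          hsafe γ' hγ' w hwγ' A hA hAγ'
        have hyB₁ : y ∉ B₁ := fun h =>
          Finset.disjoint_left.mp hB₁γ h (Finset.mem_insert_self _ _)
        have hne : B₁ ≠ A₁ := fun h => hyB₁ (h ▸ hyA₁)
        have hmem : w ∈ B₁ ∩ A₁ := Finset.mem_inter.mpr ⟨hwB₁, hwA₁⟩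
        have hpos : 1 ≤ (B₁ ∩ A₁).card := Finset.card_pos.mpr ⟨w, hmem⟩
        exact hproper B₁ A₁ hB₁ hA₁ hne (by omega) (hQ₁.trans hP₁.symm)
      · -- A ∩ A₁ nonempty
        exact hproper A A₁ hA hA₁ (Ne.symm hA₁ne) (by omega) (hP₁.symm)
  · -- a > c + r + 1, so b = 1
    have hna : n - a = b + c + r := by omega
    have hb1 : b = 1 := by
      rcases min_le_iff.mp (le_refl (min a (n - a))) with _ | _ <;> omega
    -- choose γ ⊆ univ \ A of size c, y ∈ A
    obtain ⟨γ, hγsub, hγ⟩ := Finset.exists_subset_card_eq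
        (s := Finset.univ \ A) (n := c) (by rw [hAc]; omega)
    obtain ⟨y, hyA⟩ : A.Nonempty := by rw [← Finset.card_pos, hA]; omega
    have hAγ : Disjoint A γ := by
      rw [Finset.disjoint_right]
      exact fun x hx hxA => (Finset.mem_sdiff.mp (hγsub hx)).2 hxA
    have hyγ : y ∉ γ := fun h => Finset.disjoint_left.mp hAγ hyA h
    obtain ⟨A₁, A₂, hA₁, hA₂, hA₁γ, hA₂γ, hP₁, hP₂, hyA₁, hyA₂⟩ :=
      hsafe γ hγ y hyγ A hA hAγ
    have hne : A₁ ≠ A₂ := fun h => hyA₂ (h ▸ hyA₁)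
    have hsubU : A₁ ∪ A₂ ⊆ Finset.univ \ γ := by
      intro x hx
      rw [Finset.mem_sdiff]
      rcases Finset.mem_union.mp hx with h | h
      · exact ⟨Finset.mem_univ x, fun hg => Finset.disjoint_left.mp hA₁γ h hg⟩
      · exact ⟨Finset.mem_univ x, fun hg => Finset.disjoint_left.mp hA₂γ h hg⟩
    have hUle : (A₁ ∪ A₂).card ≤ n - c := by
      have := Finset.card_le_card hsubU
      rwa [Finset.card_sdiff_of_subset (Finset.subset_univ γ), hcard, hγ] at this
    have hsum : (A₁ ∪ A₂).card + (A₁ ∩ A₂).card = A₁.card + A₂.card :=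
      Finset.card_union_add_card_inter A₁ A₂
    exact hproper A₁ A₂ hA₁ hA₂ hne (by omega) (hP₁.trans hP₂.symm)
end
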